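/- Let Λ(γ) = M0 + Σj Mj*γj be an LME closed under multiplication, let D ⊆ ℝ^k be a bounded polytope with vertex set {γ1,...,γM}, let θ ⊆ ℝ^n be an initial set, and t ≥ 0. Define RS_i = {exp(Λ(γi)·t)·x0 : x0 ∈ θ}. Then for every γ ∈ D and x0 ∈ θ, the point exp(Λ(γ)·t)·x0 lies in the convex hull of RS_1 ∪ ... ∪ RS_M; i.e., the convex hull of the vertex reachable sets contains the reachable set for every dynamics sampled from D. -/

import Mathlib

open Matrix

noncomputable def supp {n : ℕ} (M : Matrix (Fin n) (Fin n) ℝ) : Matrix (Fin n) (Fin n) Bool :=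
  fun i j => decide (M i j ≠ 0)

def bmul {n : ℕ} (A B : Matrix (Fin n) (Fin n) Bool) : Matrix (Fin n) (Fin n) Bool :=
  fun i j => decide (∃ l, A i l = true ∧ B l j = true)

def ble {n : ℕ} (A B : Matrix (Fin n) (Fin n) Bool) : Prop :=
  ∀ i j, B i j = false → A i j = false

section Aux

variable {n k : ℕ} (M0 : Matrix (Fin n) (Fin n) ℝ) (M : Fin k → Matrix (Fin n) (Fin n) ℝ)

/-- The property of having support inside the union of the supports of the `M j`. -/
def QQ (X : Matrix (Fin n) (Fin n) ℝ) : Prop := ∀ i l, X i l ≠ 0 → ∃ j, M j i l ≠ 0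

lemma QQ_mul_M0 (h2 : ∀ j, ble (bmul (supp (M j)) (supp M0)) (supp (M j)))
    {X : Matrix (Fin n) (Fin n) ℝ} (hX : QQ M X) : QQ M (X * M0) := by
  intro i l hne
  rw [Matrix.mul_apply] at hne
  obtain ⟨m, hm⟩ := Finset.exists_ne_zero_of_sum_ne_zero hne
  have hX' : X i m ≠ 0 := fun h => hm.2 (by simp [h])
  have hM0 : M0 m l ≠ 0 := fun h => hm.2 (by simp [h])
  obtain ⟨j, hj⟩ := hX i m hX'
  refine ⟨j, fun h => ?_⟩
  have := h2 j i l (by simp [supp, h])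
  simp only [bmul, supp, decide_eq_false_iff_not, not_exists, not_and,
    decide_eq_true_eq] at this
  exact this m hj hM0

lemma QQ_mul_M0_pow (h2 : ∀ j, ble (bmul (supp (M j)) (supp M0)) (supp (M j)))
    {X : Matrix (Fin n) (Fin n) ℝ} (hX : QQ M X) (b : ℕ) : QQ M (X * M0 ^ b) := by
  induction b with
  | zero => simpa using hX
  | succ b ih =>
    rw [pow_succ, ← mul_assoc]
    exact QQ_mul_M0 M0 M h2 ih

lemma QQ_mul_eq_zero (h3 : ∀ j l, bmul (supp (M j)) (supp (M l)) = fun _ _ => false)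
    {X Y : Matrix (Fin n) (Fin n) ℝ} (hX : QQ M X) (hY : QQ M Y) : X * Y = 0 := by
  ext i o
  rw [Matrix.mul_apply]
  refine Finset.sum_eq_zero fun m _ => ?_
  by_contra hne
  have hX' : X i m ≠ 0 := fun h => hne (by simp [h])
  have hY' : Y m o ≠ 0 := fun h => hne (by simp [h])
  obtain ⟨j, hj⟩ := hX i m hX'
  obtain ⟨l, hl⟩ := hY m o hY'
  have := congrFun (congrFun (h3 j l) i) o
  simp only [bmul, supp, decide_eq_false_iff_not, not_exists, not_and,
    decide_eq_true_eq] at this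
  exact this m hj hl

lemma key_zero (h2 : ∀ j, ble (bmul (supp (M j)) (supp M0)) (supp (M j)))
    (h3 : ∀ j l, bmul (supp (M j)) (supp (M l)) = fun _ _ => false)
    {X Y : Matrix (Fin n) (Fin n) ℝ} (hX : QQ M X) (hY : QQ M Y) (b : ℕ) :
    X * M0 ^ b * Y = 0 :=
  QQ_mul_eq_zero M h3 (QQ_mul_M0_pow M0 M h2 hX b) hY

lemma key_zero_smul (h2 : ∀ j, ble (bmul (supp (M j)) (supp M0)) (supp (M j)))
    (h3 : ∀ j l, bmul (supp (M j)) (supp (M l)) = fun _ _ => false)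
    {X Y : Matrix (Fin n) (Fin n) ℝ} (hX : QQ M X) (hY : QQ M Y) (t : ℝ) (b : ℕ) :
    X * (t • M0) ^ b * Y = 0 := by
  rw [smul_pow, mul_smul_comm, smul_mul_assoc, key_zero M0 M h2 h3 hX hY b, smul_zero]

/-- Expansion of the power of a perturbed matrix when all words with two `B`'s vanish. -/
lemma pow_expand {A B : Matrix (Fin n) (Fin n) ℝ}
    (h : ∀ b, B * A ^ b * B = 0) (m : ℕ) :
    (A + B) ^ m = A ^ m + ∑ x ∈ Finset.range m, A ^ x * B * A ^ (m - 1 - x) := by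
  induction m with
  | zero => simp
  | succ m ih =>
    rw [pow_succ, ih, add_mul, mul_add, mul_add]
    have hzero : (∑ x ∈ Finset.range m, A ^ x * B * A ^ (m - 1 - x)) * B = 0 := by
      rw [Finset.sum_mul]
      refine Finset.sum_eq_zero fun x _ => ?_
      rw [mul_assoc (A ^ x), mul_assoc (A ^ x), h, mul_zero]
    rw [hzero, add_zero, ← pow_succ]
    have hsum : (∑ x ∈ Finset.range m, A ^ x * B * A ^ (m - 1 - x)) * A
        = ∑ x ∈ Finset.range m, A ^ x * B * A ^ (m - x) := by
      rw [Finset.sum_mul]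
      refine Finset.sum_congr rfl fun x hx => ?_
      rw [Finset.mem_range] at hx
      rw [mul_assoc, ← pow_succ]
      congr 2
      omega
    rw [hsum]
    have : ∑ x ∈ Finset.range (m + 1), A ^ x * B * A ^ (m + 1 - 1 - x)
        = (∑ x ∈ Finset.range m, A ^ x * B * A ^ (m - x)) + A ^ m * B := by
      rw [Finset.sum_range_succ]
      simp only [Nat.add_sub_cancel]
      rw [Nat.sub_self, pow_zero, mul_one]
    rw [this]
    abel

end Aux

section Main

lemma sum_mulVec {ι : Type*} {n : ℕ} (s : Finset ι) (f : ι → Matrix (Fin n) (Fin n) ℝ)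
    (x : Fin n → ℝ) : (∑ i ∈ s, f i).mulVec x = ∑ i ∈ s, (f i).mulVec x := by
  induction s using Finset.cons_induction with
  | empty => simp [Matrix.zero_mulVec]
  | cons a s ha ih => simp [Matrix.add_mulVec, ih]

lemma exp_affine {n k p : ℕ} (M0 : Matrix (Fin n) (Fin n) ℝ)
    (M : Fin k → Matrix (Fin n) (Fin n) ℝ)
    (h2 : ∀ j, ble (bmul (supp (M j)) (supp M0)) (supp (M j)))
    (h3 : ∀ j l, bmul (supp (M j)) (supp (M l)) = fun _ _ => false)
    (t : ℝ) (V : Fin p → Fin k → ℝ) (s : Finset (Fin p)) (w : Fin p → ℝ)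
    (hw : ∑ i ∈ s, w i = 1) (γ : Fin k → ℝ) (hγ : γ = ∑ i ∈ s, w i • V i) :
    NormedSpace.exp (t • (M0 + ∑ j, γ j • M j))
      = ∑ i ∈ s, w i • NormedSpace.exp (t • (M0 + ∑ j, V i j • M j)) := by
  letI : SeminormedRing (Matrix (Fin n) (Fin n) ℝ) := Matrix.linftyOpSemiNormedRing
  letI : NormedRing (Matrix (Fin n) (Fin n) ℝ) := Matrix.linftyOpNormedRing
  letI : NormedAlgebra ℝ (Matrix (Fin n) (Fin n) ℝ) := Matrix.linftyOpNormedAlgebra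
  set A : Matrix (Fin n) (Fin n) ℝ := t • M0 with hA
  set Bf : (Fin k → ℝ) → Matrix (Fin n) (Fin n) ℝ :=
    fun g => t • ∑ j, g j • M j with hBf
  have split : ∀ g : Fin k → ℝ, t • (M0 + ∑ j, g j • M j) = A + Bf g := fun g => smul_add t _ _
  have hQB : ∀ g : Fin k → ℝ, QQ M (Bf g) := by
    intro g i l hne
    by_contra hall
    push_neg at hall
    apply hne
    simp only [hBf, Matrix.smul_apply, Matrix.sum_apply, Matrix.smul_apply]
    rw [Finset.sum_congr rfl (fun j _ => by rw [hall j, smul_zero] :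
      ∀ j ∈ Finset.univ, g j • M j i l = (0:ℝ))]
    simp
  have hkey : ∀ g g' : Fin k → ℝ, ∀ b, Bf g * A ^ b * Bf g' = 0 := fun g g' b =>
    key_zero_smul M0 M h2 h3 (hQB g) (hQB g') t b
  -- linearity of Bf over the convex combination
  have hlin : Bf γ = ∑ i ∈ s, w i • Bf (V i) := by
    simp only [hBf, hγ, Finset.sum_apply, Pi.smul_apply, smul_eq_mul, Finset.sum_smul,
      mul_smul]
    rw [Finset.sum_comm, Finset.smul_sum]
    refine Finset.sum_congr rfl fun i _ => ?_
    rw [← Finset.smul_sum, smul_comm]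
  -- affine expansion of the powers
  have hpow : ∀ m : ℕ, (A + Bf γ) ^ m = ∑ i ∈ s, w i • (A + Bf (V i)) ^ m := by
    intro m
    rw [pow_expand (fun b => hkey γ γ b) m, hlin]
    have expand : ∀ i : Fin p,
        (A + Bf (V i)) ^ m = A ^ m + ∑ x ∈ Finset.range m, A ^ x * Bf (V i) * A ^ (m - 1 - x) :=
      fun i => pow_expand (fun b => hkey (V i) (V i) b) m
    calc A ^ m + ∑ x ∈ Finset.range m,
          A ^ x * (∑ i ∈ s, w i • Bf (V i)) * A ^ (m - 1 - x)
        = A ^ m + ∑ x ∈ Finset.range m, ∑ i ∈ s,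
            w i • (A ^ x * Bf (V i) * A ^ (m - 1 - x)) := by
          congr 1
          refine Finset.sum_congr rfl fun x _ => ?_
          rw [Finset.mul_sum, Finset.sum_mul]
          refine Finset.sum_congr rfl fun i _ => ?_
          rw [mul_smul_comm, smul_mul_assoc]
      _ = ∑ i ∈ s, w i • (A + Bf (V i)) ^ m := by
          rw [Finset.sum_comm]
          have : ∀ i : Fin p, i ∈ s →
              w i • (A + Bf (V i)) ^ m = w i • A ^ m +
                ∑ x ∈ Finset.range m, w i • (A ^ x * Bf (V i) * A ^ (m - 1 - x)) := by
            intro i _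
            rw [expand i, smul_add, Finset.smul_sum]
          rw [Finset.sum_congr rfl this, Finset.sum_add_distrib, ← Finset.sum_smul, hw,
            one_smul, Finset.sum_comm]
  -- pass to the exponential series
  have hsummable : ∀ i : Fin p,
      Summable (fun m : ℕ => ((m.factorial : ℝ))⁻¹ • (A + Bf (V i)) ^ m) := fun i =>
    NormedSpace.expSeries_summable' (𝕂 := ℝ) (A + Bf (V i))
  simp only [split, NormedSpace.exp_eq_tsum ℝ]
  calc ∑' m : ℕ, ((m.factorial : ℝ))⁻¹ • (A + Bf γ) ^ m
      = ∑' m : ℕ, ∑ i ∈ s, w i • (((m.factorial : ℝ))⁻¹ • (A + Bf (V i)) ^ m) := by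
        refine tsum_congr fun m => ?_
        rw [hpow m, Finset.smul_sum]
        refine Finset.sum_congr rfl fun i _ => ?_
        rw [smul_comm]
    _ = ∑ i ∈ s, ∑' m : ℕ, w i • (((m.factorial : ℝ))⁻¹ • (A + Bf (V i)) ^ m) :=
        Summable.tsum_finsetSum fun i _ => (hsummable i).const_smul (w i)
    _ = ∑ i ∈ s, w i • ∑' m : ℕ, ((m.factorial : ℝ))⁻¹ • (A + Bf (V i)) ^ m := by
        refine Finset.sum_congr rfl fun i _ => ?_
        rw [Summable.tsum_const_smul _ (hsummable i)]

end Main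

theorem convexHull_vertex_reach_sets_contains_reach_set {n k p : ℕ}
    (M0 : Matrix (Fin n) (Fin n) ℝ) (M : Fin k → Matrix (Fin n) (Fin n) ℝ)
    (h0 : ble (bmul (supp M0) (supp M0)) (supp M0))
    (h1 : ∀ j, ble (bmul (supp M0) (supp (M j))) (supp (M j)))
    (h2 : ∀ j, ble (bmul (supp (M j)) (supp M0)) (supp (M j)))
    (h3 : ∀ j l, bmul (supp (M j)) (supp (M l)) = fun _ _ => false)
    (V : Fin p → (Fin k → ℝ))   -- the vertices of the polytope D
    (θ : Set (Fin n → ℝ))       -- the initial set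
    (t : ℝ) (ht : 0 ≤ t)
    (RS : Fin p → Set (Fin n → ℝ))
    (hRS : ∀ i, RS i =
      (fun x0 => (NormedSpace.exp (t • (M0 + ∑ j, V i j • M j))).mulVec x0) '' θ) :
    ∀ γ ∈ convexHull ℝ (Set.range V), ∀ x0 ∈ θ,
      (NormedSpace.exp (t • (M0 + ∑ j, γ j • M j))).mulVec x0
        ∈ convexHull ℝ (⋃ i, RS i) := by
  intro γ hγ x0 hx0
  rw [convexHull_range_eq_exists_affineCombination] at hγ
  obtain ⟨s, w, hw0, hw1, hγeq⟩ := hγ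
  have hγ' : γ = ∑ i ∈ s, w i • V i := by
    rw [← hγeq, Finset.affineCombination_eq_linear_combination _ _ _ hw1]
  rw [exp_affine M0 M h2 h3 t V s w hw1 γ hγ', sum_mulVec]
  have heq : ∀ i ∈ s, (w i • NormedSpace.exp (t • (M0 + ∑ j, V i j • M j))).mulVec x0
      = w i • (NormedSpace.exp (t • (M0 + ∑ j, V i j • M j))).mulVec x0 := fun i _ =>
    Matrix.smul_mulVec _ _ _
  rw [Finset.sum_congr rfl heq]
  refine (convex_convexHull ℝ _).sum_mem hw0 hw1 fun i hi => ?_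
  apply subset_convexHull
  refine Set.mem_iUnion.mpr ⟨i, ?_⟩
  rw [hRS i]
  exact ⟨x0, hx0, rfl⟩
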